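/- The factor i₄(k) = 9 c(k)²·(((k c(k))')² − 1) + (c(k)² − c(2k)²)·(3 + 15 c(k)² + 6 k c(k) c'(k) − k² c'(k)²), with c(k) = sqrt(tanh(k)/k) (T = 0), satisfies i₄(k) > 0 for all sufficiently small k > 0. -/

import Mathlib

open Filter

noncomputable def cww (k : ℝ) : ℝ := Real.sqrt (Real.tanh k / k)

noncomputable def i4 (k : ℝ) : ℝ :=
  9 * cww k ^ 2 * ((deriv (fun k => k * cww k) k) ^ 2 - 1) +
    (cww k ^ 2 - cww (2 * k) ^ 2) *
      (3 + 15 * cww k ^ 2 + 6 * k * cww k * deriv cww k - k ^ 2 * (deriv cww k) ^ 2)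

/-! Auxiliary definitions -/

noncomputable def Sf (k : ℝ) : ℝ := Real.tanh k / k
noncomputable def uf (k : ℝ) : ℝ := (Sf k - 1) / k ^ 2
noncomputable def vf (k : ℝ) : ℝ := (Sf (2 * k) - 1) / k ^ 2
noncomputable def Gf (k : ℝ) : ℝ :=
  -9 * (Sf k) ^ 2 + (9 / 4) * k ^ 2 * (uf k - (Sf k) ^ 2) ^ 2 +
    (uf k - vf k) *
      (3 + 15 * Sf k - 3 * k ^ 2 * ((Sf k) ^ 2 + uf k) -
        k ^ 4 * ((Sf k) ^ 2 + uf k) ^ 2 / (4 * Sf k))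

lemma hasDerivAt_tanh (x : ℝ) : HasDerivAt Real.tanh (1 - Real.tanh x ^ 2) x := by
  have h := (Real.hasDerivAt_sinh x).div (Real.hasDerivAt_cosh x) (Real.cosh_pos x).ne'
  have : HasDerivAt (fun y => Real.sinh y / Real.cosh y)
      ((Real.cosh x * Real.cosh x - Real.sinh x * Real.sinh x) / Real.cosh x ^ 2) x := h
  have heq : (Real.cosh x * Real.cosh x - Real.sinh x * Real.sinh x) / Real.cosh x ^ 2
      = 1 - Real.tanh x ^ 2 := by
    rw [Real.tanh_eq_sinh_div_cosh]
    have hc := (Real.cosh_pos x).ne'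
    have hid : Real.cosh x ^ 2 - Real.sinh x ^ 2 = 1 := Real.cosh_sq_sub_sinh_sq x
    field_simp
  rw [heq] at this
  exact this.congr_of_eventuallyEq (by filter_upwards with y using
    (Real.tanh_eq_sinh_div_cosh y).symm ▸ rfl)

lemma tanh_nonneg {x : ℝ} (hx : 0 ≤ x) : 0 ≤ Real.tanh x := by
  rw [Real.tanh_eq_sinh_div_cosh]
  rcases hx.lt_or_eq with h | h
  · exact le_of_lt (div_pos (Real.sinh_pos_iff.2 h) (Real.cosh_pos x))
  · simp [← h]

lemma tanh_pos {x : ℝ} (hx : 0 < x) : 0 < Real.tanh x := by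
  rw [Real.tanh_eq_sinh_div_cosh]
  exact div_pos (Real.sinh_pos_iff.2 hx) (Real.cosh_pos x)

/-- Generic helper: if `f 0 = 0` and `deriv f ≥ 0` on `[0,b]`, then `f ≥ 0` on `[0,b]`. -/
lemma nonneg_of_deriv {f f' : ℝ → ℝ} (hd : ∀ x, HasDerivAt f (f' x) x)
    (hf0 : f 0 = 0) {b : ℝ} (hb : ∀ x ∈ Set.Icc (0:ℝ) b, 0 ≤ f' x) :
    ∀ x ∈ Set.Icc (0:ℝ) b, 0 ≤ f x := by
  intro x hx
  have hmono : MonotoneOn f (Set.Icc (0:ℝ) b) := by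
    apply monotoneOn_of_deriv_nonneg (convex_Icc 0 b)
    · exact fun y _ => (hd y).continuousAt.continuousWithinAt
    · exact fun y hy => ((hd y).differentiableAt).differentiableWithinAt
    · intro y hy
      rw [(hd y).deriv]
      exact hb y (interior_subset hy)
  have h0 : (0:ℝ) ∈ Set.Icc (0:ℝ) b := ⟨le_refl _, hx.1.trans hx.2⟩
  have := hmono h0 hx hx.1
  simpa [hf0] using this

lemma tanh_le_self {x : ℝ} (hx : 0 ≤ x) : Real.tanh x ≤ x := by
  have hd : ∀ y : ℝ, HasDerivAt (fun z => z - Real.tanh z) (Real.tanh y ^ 2) y := by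
    intro y
    have := (hasDerivAt_id y).sub (hasDerivAt_tanh y)
    exact this.congr_deriv (by ring)
  have := nonneg_of_deriv hd (by simp) (b := x)
    (fun y _ => sq_nonneg _) x ⟨hx, le_refl x⟩
  linarith

lemma tanh_lower {x : ℝ} (hx : 0 ≤ x) : x - x ^ 3 / 3 ≤ Real.tanh x := by
  have hd : ∀ y : ℝ, HasDerivAt (fun z => Real.tanh z - z + z ^ 3 / 3)
      (y ^ 2 - Real.tanh y ^ 2) y := by
    intro y
    have h1 : HasDerivAt (fun z : ℝ => z ^ 3 / 3) (y ^ 2) y := by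
      have := (hasDerivAt_pow 3 y).div_const 3
      simpa using this.congr_deriv (by ring)
    have := ((hasDerivAt_tanh y).sub (hasDerivAt_id y)).add h1
    exact this.congr_deriv (by ring)
  have hb : ∀ y ∈ Set.Icc (0:ℝ) x, 0 ≤ y ^ 2 - Real.tanh y ^ 2 := by
    intro y hy
    have h1 : Real.tanh y ≤ y := tanh_le_self hy.1
    have h2 : 0 ≤ Real.tanh y := tanh_nonneg hy.1
    nlinarith
  have := nonneg_of_deriv hd (by simp) hb x ⟨hx, le_refl x⟩
  linarith

lemma tanh_upper {x : ℝ} (hx : 0 ≤ x) (hx1 : x ≤ 1) :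
    Real.tanh x ≤ x - x ^ 3 / 3 + 2 * x ^ 5 / 15 := by
  have hd : ∀ y : ℝ, HasDerivAt
      (fun z => z - z ^ 3 / 3 + 2 * z ^ 5 / 15 - Real.tanh z)
      (Real.tanh y ^ 2 - y ^ 2 + 2 * y ^ 4 / 3) y := by
    intro y
    have h3 : HasDerivAt (fun z : ℝ => z ^ 3 / 3) (y ^ 2) y := by
      have := (hasDerivAt_pow 3 y).div_const 3
      simpa using this.congr_deriv (by ring)
    have h5 : HasDerivAt (fun z : ℝ => 2 * z ^ 5 / 15) (2 * y ^ 4 / 3) y := by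
      have := ((hasDerivAt_pow 5 y).const_mul 2).div_const 15
      simpa using this.congr_deriv (by ring)
    have := (((hasDerivAt_id y).sub h3).add h5).sub (hasDerivAt_tanh y)
    exact this.congr_deriv (by ring)
  have hb : ∀ y ∈ Set.Icc (0:ℝ) x, 0 ≤ Real.tanh y ^ 2 - y ^ 2 + 2 * y ^ 4 / 3 := by
    intro y hy
    have hy1 : y ≤ 1 := hy.2.trans hx1
    have h1 : y - y ^ 3 / 3 ≤ Real.tanh y := tanh_lower hy.1
    have hy3 : y ^ 3 ≤ y := by nlinarith [hy.1, sq_nonneg y]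
    have h2 : 0 ≤ y - y ^ 3 / 3 := by linarith [hy.1, hy3]
    have h4 : (y - y ^ 3 / 3) ^ 2 ≤ Real.tanh y ^ 2 := by nlinarith
    nlinarith [pow_nonneg hy.1 6, h4]
  have := nonneg_of_deriv hd (by simp) hb x ⟨hx, le_refl x⟩
  linarith

lemma mem_Ioo_eventually : ∀ᶠ k in nhdsWithin (0:ℝ) (Set.Ioi 0), k ∈ Set.Ioo (0:ℝ) 1 :=
  eventually_of_mem (Ioo_mem_nhdsGT_of_mem (by norm_num : (0:ℝ) ∈ Set.Ico (0:ℝ) 1))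
    (fun _ h => h)

lemma tendsto_tanh_sub_div_cube :
    Tendsto (fun k => (Real.tanh k - k) / k ^ 3) (nhdsWithin 0 (Set.Ioi 0)) (nhds (-1/3)) := by
  apply tendsto_of_tendsto_of_tendsto_of_le_of_le' (g := fun _ : ℝ => (-1/3 : ℝ))
    (h := fun k : ℝ => -1/3 + 2 * k ^ 2 / 15)
  · exact tendsto_const_nhds
  · have hk : Tendsto (fun k : ℝ => k) (nhdsWithin 0 (Set.Ioi 0)) (nhds 0) :=
      tendsto_id.mono_left nhdsWithin_le_nhds
    have := (((hk.pow 2).const_mul 2).div_const 15).const_add (-1/3 : ℝ)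
    simpa using this
  · filter_upwards [mem_Ioo_eventually] with k hk
    have h1 : k - k ^ 3 / 3 ≤ Real.tanh k := tanh_lower hk.1.le
    have hk3 : 0 < k ^ 3 := pow_pos hk.1 3
    rw [le_div_iff₀ hk3]
    nlinarith
  · filter_upwards [mem_Ioo_eventually] with k hk
    have h1 : Real.tanh k ≤ k - k ^ 3 / 3 + 2 * k ^ 5 / 15 := tanh_upper hk.1.le hk.2.le
    have hk3 : 0 < k ^ 3 := pow_pos hk.1 3
    rw [div_le_iff₀ hk3]
    nlinarith

lemma tendsto_Sf : Tendsto Sf (nhdsWithin 0 (Set.Ioi 0)) (nhds 1) := by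
  apply tendsto_of_tendsto_of_tendsto_of_le_of_le' (g := fun k : ℝ => 1 - k ^ 2 / 3)
    (h := fun _ : ℝ => (1:ℝ))
  · have hk : Tendsto (fun k : ℝ => k) (nhdsWithin 0 (Set.Ioi 0)) (nhds 0) :=
      tendsto_id.mono_left nhdsWithin_le_nhds
    have := ((hk.pow 2).div_const 3).const_sub (1:ℝ)
    simpa using this
  · exact tendsto_const_nhds
  · filter_upwards [mem_Ioo_eventually] with k hk
    have h1 : k - k ^ 3 / 3 ≤ Real.tanh k := tanh_lower hk.1.le
    rw [Sf, le_div_iff₀ hk.1]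
    nlinarith
  · filter_upwards [mem_Ioo_eventually] with k hk
    have h1 : Real.tanh k ≤ k := tanh_le_self hk.1.le
    rw [Sf, div_le_one hk.1]
    exact h1

lemma tendsto_uf : Tendsto uf (nhdsWithin 0 (Set.Ioi 0)) (nhds (-1/3)) := by
  apply tendsto_tanh_sub_div_cube.congr'
  filter_upwards [mem_Ioo_eventually] with k hk
  have hk0 : k ≠ 0 := hk.1.ne'
  rw [uf, Sf, div_sub_one hk0, div_div,
    div_eq_div_iff (pow_ne_zero 3 hk0) (by simp [hk0] : k * k ^ 2 ≠ 0)]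
  ring

lemma tendsto_vf : Tendsto vf (nhdsWithin 0 (Set.Ioi 0)) (nhds (-4/3)) := by
  have h2 : Tendsto (fun k : ℝ => 2 * k) (nhdsWithin 0 (Set.Ioi 0))
      (nhdsWithin 0 (Set.Ioi 0)) := by
    apply tendsto_nhdsWithin_of_tendsto_nhds_of_eventually_within
    · have : Tendsto (fun k : ℝ => 2 * k) (nhds 0) (nhds 0) := by
        have := (tendsto_id (x := nhds (0:ℝ))).const_mul (2:ℝ)
        simpa using this
      exact this.mono_left nhdsWithin_le_nhds
    · filter_upwards [self_mem_nhdsWithin] with k hk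
      exact mul_pos (by norm_num : (0:ℝ) < 2) hk
  have hcomp := tendsto_tanh_sub_div_cube.comp h2
  have := hcomp.const_mul (4:ℝ)
  have h4 : (4:ℝ) * (-1/3) = -4/3 := by norm_num
  rw [h4] at this
  apply this.congr'
  filter_upwards [mem_Ioo_eventually] with k hk
  have hk0 : k ≠ 0 := hk.1.ne'
  have h2k : (2:ℝ) * k ≠ 0 := mul_ne_zero two_ne_zero hk0
  simp only [Function.comp_apply, vf, Sf]
  rw [div_sub_one h2k, div_div, ← mul_div_assoc,
    div_eq_div_iff (by simp [hk0] : ((2:ℝ)*k) ^ 3 ≠ 0) (by simp [hk0] : (2:ℝ) * k * k ^ 2 ≠ 0)]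
  ring

lemma tendsto_Gf : Tendsto Gf (nhdsWithin 0 (Set.Ioi 0)) (nhds 9) := by
  have hk : Tendsto (fun k : ℝ => k) (nhdsWithin 0 (Set.Ioi 0)) (nhds 0) :=
    tendsto_id.mono_left nhdsWithin_le_nhds
  have hS := tendsto_Sf
  have hu := tendsto_uf
  have hv := tendsto_vf
  have h1 : Tendsto (fun k => -9 * (Sf k) ^ 2) (nhdsWithin 0 (Set.Ioi 0)) (nhds (-9 * 1 ^ 2)) :=
    (hS.pow 2).const_mul _
  have h2 : Tendsto (fun k => (9 / 4 : ℝ) * k ^ 2 * (uf k - (Sf k) ^ 2) ^ 2)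
      (nhdsWithin 0 (Set.Ioi 0)) (nhds ((9/4) * 0 ^ 2 * ((-1/3) - 1 ^ 2) ^ 2)) :=
    (((hk.pow 2).const_mul (9/4 : ℝ)).mul ((hu.sub (hS.pow 2)).pow 2))
  have h3 : Tendsto (fun k => (uf k - vf k) *
      (3 + 15 * Sf k - 3 * k ^ 2 * ((Sf k) ^ 2 + uf k) -
        k ^ 4 * ((Sf k) ^ 2 + uf k) ^ 2 / (4 * Sf k)))
      (nhdsWithin 0 (Set.Ioi 0))
      (nhds (((-1/3) - (-4/3)) *
        (3 + 15 * 1 - 3 * 0 ^ 2 * (1 ^ 2 + (-1/3)) -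
          0 ^ 4 * (1 ^ 2 + (-1/3)) ^ 2 / (4 * 1)))) := by
    apply (hu.sub hv).mul
    apply Tendsto.sub
    · exact ((tendsto_const_nhds.add (hS.const_mul 15)).sub
        (((hk.pow 2).const_mul 3).mul ((hS.pow 2).add hu)))
    · exact ((hk.pow 4).mul (((hS.pow 2).add hu).pow 2)).div (hS.const_mul 4) (by norm_num)
  have htot := (h1.add h2).add h3
  have hval : (-9 * (1:ℝ) ^ 2 + 9 / 4 * 0 ^ 2 * (-1 / 3 - 1 ^ 2) ^ 2) +
      ((-1 / 3 - -4 / 3) *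
        (3 + 15 * 1 - 3 * (0:ℝ) ^ 2 * (1 ^ 2 + -1 / 3) -
          0 ^ 4 * (1 ^ 2 + -1 / 3) ^ 2 / (4 * 1))) = 9 := by norm_num
  rw [hval] at htot
  exact htot

lemma i4_eq (k : ℝ) (hk : 0 < k) : i4 k = k ^ 2 * Gf k := by
  have hk0 : k ≠ 0 := hk.ne'
  set t := Real.tanh k with ht
  have htpos : 0 < t := tanh_pos hk
  have hSpos : 0 < Sf k := div_pos htpos hk
  have hS0 : Sf k ≠ 0 := hSpos.ne'
  -- derivative of S
  have hSd : HasDerivAt (fun x => Real.tanh x / x)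
      (((1 - t ^ 2) * k - t * 1) / k ^ 2) k :=
    (hasDerivAt_tanh k).div (hasDerivAt_id k) hk0
  -- cww and its derivative
  set c := cww k with hc
  have hcS : c = Real.sqrt (Sf k) := rfl
  have hcpos : 0 < c := by rw [hcS]; exact Real.sqrt_pos.2 hSpos
  have hc2 : c ^ 2 = Sf k := by rw [hcS]; exact Real.sq_sqrt hSpos.le
  have hcd : HasDerivAt cww ((((1 - t ^ 2) * k - t * 1) / k ^ 2) / (2 * c)) k := by
    have := hSd.sqrt hS0
    exact this
  have hkcd : HasDerivAt (fun x => x * cww x)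
      (1 * cww k + k * ((((1 - t ^ 2) * k - t * 1) / k ^ 2) / (2 * c))) k :=
    (hasDerivAt_id k).mul hcd
  -- cww squares
  have hsq1 : cww k ^ 2 = Sf k := hc2
  have hsq2 : cww (2 * k) ^ 2 = Sf (2 * k) := by
    rw [cww, Sf]
    exact Real.sq_sqrt (le_of_lt (div_pos (tanh_pos (by linarith)) (by linarith)))
  -- rewrite i4
  rw [i4, hkcd.deriv, hcd.deriv, hsq1, hsq2]
  -- express everything in terms of c, k, Sf (2*k)
  have htc : t = k * c ^ 2 := by
    rw [hc2, Sf]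
    field_simp
    exact ht
  have huk : uf k = (c ^ 2 - 1) / k ^ 2 := by rw [uf, hc2]
  have hvk : vf k = (Sf (2 * k) - 1) / k ^ 2 := rfl
  rw [Gf, huk, hvk, ← hc2, htc, ← hc]
  have hcne : c ≠ 0 := hcpos.ne'
  field_simp
  ring

theorem i4_pos_near_zero : ∀ᶠ k in nhdsWithin (0 : ℝ) (Set.Ioi 0), 0 < i4 k := by
  have hG : ∀ᶠ k in nhdsWithin (0 : ℝ) (Set.Ioi 0), 0 < Gf k :=
    tendsto_Gf.eventually_const_lt (by norm_num : (0:ℝ) < 9)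
  filter_upwards [hG, self_mem_nhdsWithin] with k hGk hk
  rw [i4_eq k hk]
  exact mul_pos (pow_pos hk 2) hGk
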